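/- Let n ≥ 2 and let h : {1,…,n} → {1,…,n} be a Hessenberg function. Suppose i, j ∈ {1,…,n} are distinct with either i < j or (i,j) a negative Hessenberg pair, and suppose w_{i,j} is a maximal element of Ω_H. Then either i = j − 1 (so that t_i − t_j is a simple root of sl_n) or (i,j) is a minimal negative Hessenberg pair. -/

import Mathlib

/-- The Bruhat order on S_n, via its combinatorial characterization:
u ≤ v iff |{a ∈ {1,…,i} : u(a) ≥ j}| ≤ |{a ∈ {1,…,i} : v(a) ≥ j}| for all i, j ∈ {1,…,n}.
Permutations are encoded on `Fin n` (position j ∈ {1,…,n} corresponds to `⟨j-1,_⟩`). -/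
def BruhatLE {n : ℕ} (u v : Equiv.Perm (Fin n)) : Prop :=
  ∀ i j : Fin n,
    (Finset.univ.filter (fun a : Fin n => a ≤ i ∧ j ≤ u a)).card ≤
    (Finset.univ.filter (fun a : Fin n => a ≤ i ∧ j ≤ v a)).card

/-- Strict Bruhat order: u < v iff u ≤ v and u ≠ v. -/
def BruhatLT {n : ℕ} (u v : Equiv.Perm (Fin n)) : Prop :=
  BruhatLE u v ∧ u ≠ v

/-- `IsWij i j w` says that w is the permutation w_{i,j}: w(i) = 1, w(j) = n, and the
values at the remaining positions, in increasing order of position, are n−1, n−2, …, 2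
(equivalently: strictly decreasing); w_{i,j} is the longest permutation with
w(i) = 1, w(j) = n. Encoded on `Fin n`: value v ∈ {1,…,n} corresponds to `⟨v-1,_⟩`. -/
def IsWij {n : ℕ} (i j : Fin n) (w : Equiv.Perm (Fin n)) : Prop :=
  (w i : ℕ) = 0 ∧ (w j : ℕ) = n - 1 ∧
    ∀ a b : Fin n, a < b → a ≠ i → a ≠ j → b ≠ i → b ≠ j → w b < w a

/-- (k,ℓ) is a negative Hessenberg pair for h: ℓ < k ≤ h(ℓ) (corresponding to the
negative Hessenberg root t_k − t_ℓ). Positions are encoded on `Fin n`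
(position p ∈ {1,…,n} corresponds to `⟨p-1,_⟩`). -/
def NegPair {n : ℕ} (h : ℕ → ℕ) (k l : Fin n) : Prop :=
  l < k ∧ (k : ℕ) + 1 ≤ h ((l : ℕ) + 1)

/-- A negative Hessenberg pair (k,ℓ) is minimal if there is no negative Hessenberg
pair (k',ℓ') ≠ (k,ℓ) with k ≤ k' and ℓ' ≤ ℓ. -/
def MinNegPair {n : ℕ} (h : ℕ → ℕ) (k l : Fin n) : Prop :=
  NegPair h k l ∧
    ∀ k' l' : Fin n, NegPair h k' l' → k ≤ k' → l' ≤ l → k' = k ∧ l' = l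

/-- Membership in Ω_H = {w_{k,ℓ} : k < ℓ} ∪ {w_{k,ℓ} : (k,ℓ) a negative Hessenberg pair}. -/
def InOmega {n : ℕ} (h : ℕ → ℕ) (u : Equiv.Perm (Fin n)) : Prop :=
  ∃ k l : Fin n, (k < l ∨ NegPair h k l) ∧ IsWij k l u

/-- m is a maximal element of Ω_H: m ∈ Ω_H and there is no u ∈ Ω_H with m < u
in the Bruhat order. -/
def MaxInOmega {n : ℕ} (h : ℕ → ℕ) (m : Equiv.Perm (Fin n)) : Prop :=
  InOmega h m ∧ ∀ u : Equiv.Perm (Fin n), InOmega h u → ¬ BruhatLT m u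

/-- Let n ≥ 2, h a Hessenberg function, and i, j distinct positions with
either i < j or (i,j) a negative Hessenberg pair. If w_{i,j} is a maximal element of
Ω_H, then either i = j − 1 (t_i − t_j is a simple root) or (i,j) is a minimal negative
Hessenberg pair. Position p ∈ {1,…,n} is encoded as `⟨p-1,_⟩ : Fin n`, so "i = j − 1"
reads `(i : ℕ) + 1 = (j : ℕ)`. -/
lemma swap_le {n : ℕ} (u : Equiv.Perm (Fin n)) (x y : Fin n) (hxy : x < y)
    (hval : u x ≤ u y) : BruhatLE u (u * Equiv.swap x y) := by
  intro i j
  classical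
  have hxny : x ≠ y := ne_of_lt hxy
  rw [Finset.card_filter, Finset.card_filter]
  simp only [Equiv.Perm.mul_apply]
  have hre : (∑ a : Fin n, if a ≤ i ∧ j ≤ u (Equiv.swap x y a) then 1 else 0)
      = ∑ a : Fin n, if Equiv.swap x y a ≤ i ∧ j ≤ u a then 1 else 0 := by
    rw [← Equiv.sum_comp (Equiv.swap x y)
      (fun b => if b ≤ i ∧ j ≤ u (Equiv.swap x y b) then 1 else 0)]
    exact Finset.sum_congr rfl (fun a _ => by rw [Equiv.swap_apply_self])
  refine le_of_le_of_eq ?_ hre.symm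
  have hy : y ∈ Finset.univ.erase x := Finset.mem_erase.mpr ⟨hxny.symm, Finset.mem_univ y⟩
  have split : ∀ F : Fin n → ℕ, ∑ a, F a
      = F x + (F y + ∑ a ∈ (Finset.univ.erase x).erase y, F a) := by
    intro F
    rw [← Finset.add_sum_erase _ F (Finset.mem_univ x), ← Finset.add_sum_erase _ F hy]
  rw [split (fun a => if a ≤ i ∧ j ≤ u a then 1 else 0),
      split (fun a => if Equiv.swap x y a ≤ i ∧ j ≤ u a then 1 else 0)]
  have hs : ∑ a ∈ (Finset.univ.erase x).erase y,
        (if Equiv.swap x y a ≤ i ∧ j ≤ u a then (1:ℕ) else 0)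
      = ∑ a ∈ (Finset.univ.erase x).erase y, (if a ≤ i ∧ j ≤ u a then 1 else 0) := by
    refine Finset.sum_congr rfl (fun a ha => ?_)
    rw [Equiv.swap_apply_of_ne_of_ne (Finset.mem_erase.mp (Finset.mem_erase.mp ha).2).1
      (Finset.mem_erase.mp ha).1]
  simp only [hs, Equiv.swap_apply_left, Equiv.swap_apply_right]
  have h1 : y ≤ i → x ≤ i := fun hh => le_trans hxy.le hh
  have h2 : j ≤ u x → j ≤ u y := fun hh => le_trans hh hval
  by_cases p1 : x ≤ i <;> by_cases p2 : y ≤ i <;> by_cases p3 : j ≤ u x <;>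
    by_cases p4 : j ≤ u y <;> simp [p1, p2, p3, p4] <;> omega

lemma stepA {n : ℕ} {u : Equiv.Perm (Fin n)} {A B A' : Fin n}
    (hAB : A ≠ B) (hlt : A < A') (hA'B : A' ≠ B)
    (hbet : ∀ c : Fin n, A < c → c < A' → c = B) (hu : IsWij A B u) :
    IsWij A' B (u * Equiv.swap A A') ∧ BruhatLE u (u * Equiv.swap A A') := by
  obtain ⟨h0, hN, hdec⟩ := hu
  have hA0 : u A ≤ u A' := by rw [Fin.le_def, h0]; omega
  refine ⟨⟨?_, ?_, ?_⟩, swap_le u A A' hlt hA0⟩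
  · simp [Equiv.Perm.mul_apply, Equiv.swap_apply_right, h0]
  · simp [Equiv.Perm.mul_apply, Equiv.swap_apply_of_ne_of_ne hAB.symm hA'B.symm, hN]
  · intro a b hab ha1 ha2 hb1 hb2
    simp only [Equiv.Perm.mul_apply]
    by_cases haA : a = A
    · subst haA
      have hbA' : A' < b := by
        rcases lt_or_ge A' b with hc | hc
        · exact hc
        · exact absurd (hbet b hab (lt_of_le_of_ne hc hb1)) hb2
      rw [Equiv.swap_apply_left,
        Equiv.swap_apply_of_ne_of_ne (ne_of_gt hab) hb1]
      exact hdec A' b hbA' (ne_of_gt hlt) hA'B (ne_of_gt hab) hb2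
    · by_cases hbA : b = A
      · subst hbA
        rw [Equiv.swap_apply_left, Equiv.swap_apply_of_ne_of_ne haA ha1]
        exact hdec a A' (lt_trans hab hlt) haA ha2 (ne_of_gt hlt) hA'B
      · rw [Equiv.swap_apply_of_ne_of_ne haA ha1,
          Equiv.swap_apply_of_ne_of_ne hbA hb1]
        exact hdec a b hab haA ha2 hbA hb2

lemma stepB {n : ℕ} {u : Equiv.Perm (Fin n)} {A B B' : Fin n}
    (hAB : A ≠ B) (hlt : B' < B) (hB'A : B' ≠ A)
    (hbet : ∀ c : Fin n, B' < c → c < B → c = A) (hu : IsWij A B u) :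
    IsWij A B' (u * Equiv.swap B' B) ∧ BruhatLE u (u * Equiv.swap B' B) := by
  obtain ⟨h0, hN, hdec⟩ := hu
  have hBN : u B' ≤ u B := by rw [Fin.le_def, hN]; omega
  refine ⟨⟨?_, ?_, ?_⟩, swap_le u B' B hlt hBN⟩
  · simp [Equiv.Perm.mul_apply, Equiv.swap_apply_of_ne_of_ne hB'A.symm hAB, h0]
  · simp [Equiv.Perm.mul_apply, Equiv.swap_apply_left, hN]
  · intro a b hab ha1 ha2 hb1 hb2
    simp only [Equiv.Perm.mul_apply]
    by_cases haB : a = B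
    · subst haB
      rw [Equiv.swap_apply_right,
        Equiv.swap_apply_of_ne_of_ne hb2 (ne_of_gt hab)]
      exact hdec B' b (lt_trans hlt hab) hB'A (ne_of_lt hlt) hb1 (ne_of_gt hab)
    · by_cases hbB : b = B
      · subst hbB
        have haB' : a < B' := by
          rcases lt_or_ge a B' with hc | hc
          · exact hc
          · exact absurd (hbet a (lt_of_le_of_ne hc (Ne.symm ha2)) hab) ha1
        rw [Equiv.swap_apply_right, Equiv.swap_apply_of_ne_of_ne ha2 haB]
        exact hdec a B' haB' ha1 haB hB'A (ne_of_lt hlt)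
      · rw [Equiv.swap_apply_of_ne_of_ne ha2 haB,
          Equiv.swap_apply_of_ne_of_ne hb2 hbB]
        exact hdec a b hab ha1 haB hb1 hbB

lemma bruhatLE_refl {n : ℕ} (u : Equiv.Perm (Fin n)) : BruhatLE u u :=
  fun _ _ => le_rfl

lemma bruhatLE_trans {n : ℕ} {u v w : Equiv.Perm (Fin n)}
    (h1 : BruhatLE u v) (h2 : BruhatLE v w) : BruhatLE u w :=
  fun i j => (h1 i j).trans (h2 i j)

lemma moveA {n : ℕ} (A' B : Fin n) (hA'B : A' ≠ B) :
    ∀ (d : ℕ) (A : Fin n) (u : Equiv.Perm (Fin n)), (A' : ℕ) - (A : ℕ) ≤ d →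
      A ≠ B → A ≤ A' → IsWij A B u → ∃ v, IsWij A' B v ∧ BruhatLE u v := by
  intro d
  induction d with
  | zero =>
    intro A u hd hAB hle hu
    have : A = A' := le_antisymm hle (by rw [Fin.le_def]; omega)
    exact ⟨u, this ▸ hu, bruhatLE_refl u⟩
  | succ d ih =>
    intro A u hd hAB hle hu
    by_cases heq : A = A'
    · exact ⟨u, heq ▸ hu, bruhatLE_refl u⟩
    · have hlt : (A : ℕ) < (A' : ℕ) := by
        have := Fin.le_def.mp hle
        rcases this.lt_or_eq with hl | he
        · exact hl
        · exact absurd (Fin.ext he) heq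
      by_cases hb : (A : ℕ) + 1 = (B : ℕ)
      · -- skip over B: step to A+2
        have hA'2 : (A : ℕ) + 2 ≤ (A' : ℕ) := by
          rcases Nat.lt_or_ge ((A : ℕ) + 1) (A' : ℕ) with hc | hc
          · omega
          · exfalso; apply hA'B; apply Fin.ext; omega
        set A₁ : Fin n := ⟨(A : ℕ) + 2, by omega⟩ with hA₁
        have h1 : A < A₁ := by rw [Fin.lt_def]; simp [hA₁]
        have h2 : A₁ ≠ B := by intro hc; apply_fun (Fin.val) at hc; simp [hA₁] at hc; omega
        have h3 : ∀ c : Fin n, A < c → c < A₁ → c = B := by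
          intro c hc1 hc2
          apply Fin.ext
          rw [Fin.lt_def] at hc1 hc2
          simp [hA₁] at hc2
          omega
        obtain ⟨hw1, hle1⟩ := stepA hAB h1 h2 h3 hu
        have h4 : A₁ ≤ A' := by rw [Fin.le_def]; simpa [hA₁] using hA'2
        obtain ⟨v, hv, hlev⟩ := ih A₁ (u * Equiv.swap A A₁) (by simp [hA₁]; omega) h2 h4 hw1
        exact ⟨v, hv, bruhatLE_trans hle1 hlev⟩
      · -- step to A+1
        set A₁ : Fin n := ⟨(A : ℕ) + 1, by omega⟩ with hA₁
        have h1 : A < A₁ := by rw [Fin.lt_def]; simp [hA₁]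
        have h2 : A₁ ≠ B := by intro hc; apply_fun (Fin.val) at hc; simp [hA₁] at hc; omega
        have h3 : ∀ c : Fin n, A < c → c < A₁ → c = B := by
          intro c hc1 hc2
          rw [Fin.lt_def] at hc1 hc2
          simp [hA₁] at hc2
          omega
        obtain ⟨hw1, hle1⟩ := stepA hAB h1 h2 h3 hu
        have h4 : A₁ ≤ A' := by rw [Fin.le_def]; simp [hA₁]; omega
        obtain ⟨v, hv, hlev⟩ := ih A₁ (u * Equiv.swap A A₁) (by simp [hA₁]; omega) h2 h4 hw1
        exact ⟨v, hv, bruhatLE_trans hle1 hlev⟩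

lemma moveB {n : ℕ} (A B' : Fin n) (hB'A : B' ≠ A) :
    ∀ (d : ℕ) (B : Fin n) (u : Equiv.Perm (Fin n)), (B : ℕ) - (B' : ℕ) ≤ d →
      A ≠ B → B' ≤ B → IsWij A B u → ∃ v, IsWij A B' v ∧ BruhatLE u v := by
  intro d
  induction d with
  | zero =>
    intro B u hd hAB hle hu
    have : B = B' := le_antisymm (by rw [Fin.le_def]; omega) hle
    exact ⟨u, this ▸ hu, bruhatLE_refl u⟩
  | succ d ih =>
    intro B u hd hAB hle hu
    by_cases heq : B = B'
    · exact ⟨u, heq ▸ hu, bruhatLE_refl u⟩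
    · have hlt : (B' : ℕ) < (B : ℕ) := by
        have := Fin.le_def.mp hle
        rcases this.lt_or_eq with hl | he
        · exact hl
        · exact absurd (Fin.ext he.symm) heq
      by_cases hb : (B : ℕ) = (A : ℕ) + 1
      · -- skip over A: step to B-2
        have hB'2 : (B' : ℕ) + 2 ≤ (B : ℕ) := by
          rcases Nat.lt_or_ge ((B' : ℕ) + 1) (B : ℕ) with hc | hc
          · omega
          · exfalso; apply hB'A; apply Fin.ext; omega
        set B₁ : Fin n := ⟨(B : ℕ) - 2, by omega⟩ with hB₁
        have h1 : B₁ < B := by rw [Fin.lt_def]; simp [hB₁]; omega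
        have h2 : B₁ ≠ A := by intro hc; apply_fun (Fin.val) at hc; simp [hB₁] at hc; omega
        have h3 : ∀ c : Fin n, B₁ < c → c < B → c = A := by
          intro c hc1 hc2
          apply Fin.ext
          rw [Fin.lt_def] at hc1 hc2
          simp [hB₁] at hc1
          omega
        obtain ⟨hw1, hle1⟩ := stepB hAB h1 h2 h3 hu
        have h4 : B' ≤ B₁ := by rw [Fin.le_def]; simp [hB₁]; omega
        have h5 : A ≠ B₁ := fun hc => h2 hc.symm
        obtain ⟨v, hv, hlev⟩ := ih B₁ (u * Equiv.swap B₁ B) (by simp [hB₁]; omega) h5 h4 hw1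
        exact ⟨v, hv, bruhatLE_trans hle1 hlev⟩
      · -- step to B-1
        set B₁ : Fin n := ⟨(B : ℕ) - 1, by omega⟩ with hB₁
        have h1 : B₁ < B := by rw [Fin.lt_def]; simp [hB₁]; omega
        have h2 : B₁ ≠ A := by intro hc; apply_fun (Fin.val) at hc; simp [hB₁] at hc; omega
        have h3 : ∀ c : Fin n, B₁ < c → c < B → c = A := by
          intro c hc1 hc2
          rw [Fin.lt_def] at hc1 hc2
          simp [hB₁] at hc1
          omega
        obtain ⟨hw1, hle1⟩ := stepB hAB h1 h2 h3 hu
        have h4 : B' ≤ B₁ := by rw [Fin.le_def]; simp [hB₁]; omega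
        have h5 : A ≠ B₁ := fun hc => h2 hc.symm
        obtain ⟨v, hv, hlev⟩ := ih B₁ (u * Equiv.swap B₁ B) (by simp [hB₁]; omega) h5 h4 hw1
        exact ⟨v, hv, bruhatLE_trans hle1 hlev⟩

lemma wij_ne {n : ℕ} {A B A' B' : Fin n} {u v : Equiv.Perm (Fin n)}
    (hu : IsWij A B u) (hv : IsWij A' B' v) (hne : A ≠ A' ∨ B ≠ B') : u ≠ v := by
  intro he
  subst he
  rcases hne with hA | hB
  · exact hA (u.injective (Fin.ext (hu.1.trans hv.1.symm)))
  · exact hB (u.injective (Fin.ext (hu.2.1.trans hv.2.1.symm)))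

theorem stmt_12 (n : ℕ) (hn : 2 ≤ n) (h : ℕ → ℕ)
    (hmono : ∀ i j, 1 ≤ i → i ≤ j → j ≤ n → h i ≤ h j)
    (hdom : ∀ j, 1 ≤ j → j ≤ n → j ≤ h j ∧ h j ≤ n)
    (i j : Fin n) (hij : i ≠ j) (hcase : i < j ∨ NegPair h i j)
    (w : Equiv.Perm (Fin n)) (hw : IsWij i j w) (hmax : MaxInOmega h w) :
    (i : ℕ) + 1 = (j : ℕ) ∨ MinNegPair h i j := by
  rcases hcase with hlt | hneg
  · -- case i < j: show i + 1 = j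
    left
    by_contra hc
    have hij' : (i : ℕ) + 1 < (j : ℕ) := by
      have := Fin.lt_def.mp hlt; omega
    set A' : Fin n := ⟨(j : ℕ) - 1, by omega⟩ with hA'
    have hA'j : A' ≠ j := by
      intro hc'; apply_fun Fin.val at hc'; simp [hA'] at hc'; omega
    have hiA' : i ≤ A' := by rw [Fin.le_def]; simp [hA']; omega
    obtain ⟨v, hv, hlev⟩ := moveA A' j hA'j ((A' : ℕ) - (i : ℕ)) i w le_rfl hij hiA' hw
    have hvo : InOmega h v := ⟨A', j, Or.inl (by rw [Fin.lt_def]; simp [hA']; omega), hv⟩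
    have hne : w ≠ v := wij_ne hw hv (Or.inl (by
      intro hc'; apply_fun Fin.val at hc'; simp [hA'] at hc'; omega))
    exact hmax.2 v hvo ⟨hlev, hne⟩
  · -- negative pair case
    right
    have hji : (j : ℕ) < (i : ℕ) := Fin.lt_def.mp hneg.1
    refine ⟨hneg, ?_⟩
    intro k' l' hkl hik' hl'j
    by_contra hc
    have hik : (i : ℕ) ≤ (k' : ℕ) := Fin.le_def.mp hik'
    have hlj : (l' : ℕ) ≤ (j : ℕ) := Fin.le_def.mp hl'j
    have hk'j : k' ≠ j := by intro hc'; apply_fun Fin.val at hc'; omega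
    obtain ⟨v₁, hv₁, hlev₁⟩ := moveA k' j hk'j ((k' : ℕ) - (i : ℕ)) i w le_rfl hij hik' hw
    have hl'k : l' ≠ k' := by intro hc'; apply_fun Fin.val at hc'; omega
    have hk'l : k' ≠ j → True := fun _ => trivial
    obtain ⟨v, hv, hlev₂⟩ := moveB k' l' hl'k ((j : ℕ) - (l' : ℕ)) j v₁ le_rfl
      hk'j hl'j hv₁
    have hvo : InOmega h v := ⟨k', l', Or.inr hkl, hv⟩
    have hne : w ≠ v := by
      refine wij_ne hw hv ?_
      by_cases hki : k' = i
      · right; intro hc'; exact hc ⟨hki, hc'.symm⟩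
      · left; exact fun hc' => hki hc'.symm
    exact hmax.2 v hvo ⟨bruhatLE_trans hlev₁ hlev₂, hne⟩
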